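/- arXiv:1501.01825 — 3 statements merged into one kernel-verified Lean document; each statement's English description precedes it below -/
import Mathlib

section
/- Let M be a compact metric space, Π_D a finite-dimensional linear space of continuous real functions on M with basis {P_k}_{k=1}^D, and x = Σ_m c_m δ_{t_m} a finite signed Dirac measure with distinct support T ⊂ M. Suppose that for every sign pattern u_m ∈ {-1,1} there exists q ∈ Π_D with q(t_m) = u_m for all t_m ∈ T and |q(t)| < 1 for all t ∈ M \ T. Then x is the unique signed Borel measure minimizing ‖x̃‖_TV over all signed Borel measures x̃ on M satisfying ∫ P_k dx̃ = ∫ P_k dx for all 1 ≤ k ≤ D. -/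
open MeasureTheory
open scoped Classical NNReal ENNReal

/-- Integral of a real function against a signed measure, via the Jordan decomposition. -/
noncomputable def sintegral {M : Type*} [MeasurableSpace M]
    (μ : SignedMeasure M) (f : M → ℝ) : ℝ :=
  (∫ x, f x ∂μ.toJordanDecomposition.posPart) - (∫ x, f x ∂μ.toJordanDecomposition.negPart)

section Aux

variable {M : Type*} [MeasurableSpace M]

/-- continuous functions on a compact space are integrable w.r.t. finite measures -/
lemma aux_integrable [MetricSpace M] [CompactSpace M] [BorelSpace M]
    {f : M → ℝ} (hf : Continuous f) (μ : Measure M) [IsFiniteMeasure μ] :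
    Integrable f μ := by
  obtain ⟨C, hC⟩ := isCompact_univ.exists_bound_of_continuousOn hf.continuousOn
  exact (integrable_const C).mono' hf.aestronglyMeasurable
    (Filter.Eventually.of_forall fun x => hC x trivial)

/-- the signed integral is independent of the decomposition into finite measures -/
lemma sintegral_eq_of_decomp (x : SignedMeasure M) (p n : Measure M)
    [IsFiniteMeasure p] [IsFiniteMeasure n]
    (h : x = p.toSignedMeasure - n.toSignedMeasure)
    {f : M → ℝ}
    (hf1 : Integrable f x.toJordanDecomposition.posPart)
    (hf2 : Integrable f x.toJordanDecomposition.negPart)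
    (hf3 : Integrable f p) (hf4 : Integrable f n) :
    sintegral x f = (∫ a, f a ∂p) - ∫ a, f a ∂n := by
  set P := x.toJordanDecomposition.posPart
  set N := x.toJordanDecomposition.negPart
  have hx2 : x = P.toSignedMeasure - N.toSignedMeasure := by
    conv_lhs => rw [← x.toSignedMeasure_toJordanDecomposition]
    rfl
  have hkey : P + n = N + p := by
    rw [← Measure.toSignedMeasure_eq_toSignedMeasure_iff,
      Measure.toSignedMeasure_add, Measure.toSignedMeasure_add]
    have h3 : P.toSignedMeasure - N.toSignedMeasure
        = p.toSignedMeasure - n.toSignedMeasure := hx2.symm.trans h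
    rw [sub_eq_sub_iff_add_eq_add] at h3
    rw [h3]; abel
  have e1 : ∫ a, f a ∂(P + n) = ∫ a, f a ∂(N + p) := by rw [hkey]
  rw [integral_add_measure hf1 hf4, integral_add_measure hf2 hf3] at e1
  simp only [sintegral]
  linarith

variable [MetricSpace M] [BorelSpace M] {s : ℕ}

lemma aux_meas_val {μ : Measure M} [IsFiniteMeasure μ] (t : Fin s → M)
    (ht : Function.Injective t) (h0 : μ (Set.range t)ᶜ = 0)
    (E : Set M) :
    (μ E).toReal = ∑ m, (μ {t m}).toReal * (if t m ∈ E then 1 else 0) := by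
  classical
  have hsplit : μ (E ∩ Set.range t) + μ (E \ Set.range t) = μ E :=
    measure_inter_add_diff E (Set.finite_range t).measurableSet
  have hd : μ (E \ Set.range t) = 0 :=
    measure_mono_null (Set.diff_subset_compl E (Set.range t)) h0
  have hU : E ∩ Set.range t
      = ⋃ m ∈ (Finset.univ.filter fun m => t m ∈ E), {t m} := by
    ext y
    simp only [Set.mem_inter_iff, Set.mem_range, Set.mem_iUnion, Finset.mem_filter,
      Finset.mem_univ, true_and, Set.mem_singleton_iff]
    constructor
    · rintro ⟨hyE, m, rfl⟩; exact ⟨m, hyE, rfl⟩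
    · rintro ⟨m, hm, rfl⟩; exact ⟨hm, m, rfl⟩
  have hb : μ (E ∩ Set.range t)
      = ∑ m ∈ (Finset.univ.filter fun m => t m ∈ E), μ {t m} := by
    rw [hU, measure_biUnion_finset]
    · intro a _ b _ hab
      simp only [Function.onFun, Set.disjoint_singleton]
      exact fun hh => hab (ht hh)
    · exact fun b _ => measurableSet_singleton _
  have : μ E = ∑ m ∈ (Finset.univ.filter fun m => t m ∈ E), μ {t m} := by
    rw [← hsplit, hd, add_zero, hb]
  rw [this, ENNReal.toReal_sum (fun a _ => measure_ne_top _ _)]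
  rw [Finset.sum_filter]
  apply Finset.sum_congr rfl
  intro m _
  split <;> simp

lemma aux_integral_concentrated {μ : Measure M} [IsFiniteMeasure μ] (t : Fin s → M)
    (ht : Function.Injective t) (h0 : μ (Set.range t)ᶜ = 0)
    {f : M → ℝ} (hfi : Integrable f μ) :
    ∫ a, f a ∂μ = ∑ m, (μ {t m}).toReal * f (t m) := by
  classical
  have hT : MeasurableSet (Set.range t) := (Set.finite_range t).measurableSet
  have h1 : (∫ a in Set.range t, f a ∂μ) + ∫ a in (Set.range t)ᶜ, f a ∂μ = ∫ a, f a ∂μ :=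
    integral_add_compl hT hfi
  have h2 : (∫ a in (Set.range t)ᶜ, f a ∂μ) = 0 := by
    rw [Measure.restrict_eq_zero.mpr h0, integral_zero_measure]
  have hR : Set.range t = ↑(Finset.univ.image t) := by
    simp [Set.image_univ]
  rw [← h1, h2, add_zero, hR, setIntegral_finset _ ((hfi.restrict))]
  rw [Finset.sum_image (fun a _ b _ h => ht h)]
  simp [smul_eq_mul, measureReal_def]

lemma aux_dirac_sum_apply (r : Fin s → ℝ≥0) (t : Fin s → M) {E : Set M}
    (hE : MeasurableSet E) :
    ((∑ m, r m • Measure.dirac (t m)) E)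
      = ∑ m, (r m : ENNReal) * (if t m ∈ E then 1 else 0) := by
  rw [Measure.finset_sum_apply]
  refine Finset.sum_congr rfl fun m _ => ?_
  rw [Measure.smul_apply, Measure.dirac_apply' _ hE]
  by_cases h : t m ∈ E <;> simp [Set.indicator, h, ENNReal.smul_def]

instance aux_fin (r : Fin s → ℝ≥0) (t : Fin s → M) :
    IsFiniteMeasure (∑ m, r m • Measure.dirac (t m)) := by
  constructor
  rw [aux_dirac_sum_apply r t MeasurableSet.univ]
  refine ENNReal.sum_lt_top.mpr fun m _ => ?_
  simp [ENNReal.mul_lt_top, ENNReal.coe_lt_top]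

lemma aux_dirac_sum_toReal (r : Fin s → ℝ≥0) (t : Fin s → M) {E : Set M}
    (hE : MeasurableSet E) :
    ((∑ m, r m • Measure.dirac (t m)) E).toReal
      = ∑ m, (r m : ℝ) * (if t m ∈ E then 1 else 0) := by
  rw [aux_dirac_sum_apply r t hE, ENNReal.toReal_sum]
  · refine Finset.sum_congr rfl fun m _ => ?_
    by_cases h : t m ∈ E <;> simp [h]
  · intro a _
    by_cases h : t a ∈ E <;> simp [h, ENNReal.mul_eq_top]

end Aux

/-- Theorem 1: if for every sign pattern there is a dual certificate
`q ∈ Π_D = span{P_k}` interpolating the signs on `T` and with `|q| < 1` off `T`, then the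
Dirac ensemble `x` is the unique TV-minimizer among signed measures matching the
measurements `⟨·, P_k⟩`. -/
theorem tv_min_unique_of_dual_certificate
    {M : Type*} [MetricSpace M] [CompactSpace M] [MeasurableSpace M] [BorelSpace M]
    {D s : ℕ} (P : Fin D → C(M, ℝ))
    (t : Fin s → M) (c : Fin s → ℝ)
    (ht : Function.Injective t) (hc : ∀ m, c m ≠ 0)
    (x : SignedMeasure M)
    (hx : x = ∑ m : Fin s, c m • (Measure.dirac (t m)).toSignedMeasure)
    (hcert : ∀ u : Fin s → ℝ, (∀ m, u m = 1 ∨ u m = -1) →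
      ∃ a : Fin D → ℝ,
        (∀ m, (∑ k : Fin D, a k * P k (t m)) = u m) ∧
        (∀ τ : M, τ ∉ Set.range t → |∑ k : Fin D, a k * P k τ| < 1)) :
    ∀ x' : SignedMeasure M,
      (∀ k : Fin D, sintegral x' (P k) = sintegral x (P k)) →
      (x.totalVariation Set.univ ≤ x'.totalVariation Set.univ ∧
        (x'.totalVariation Set.univ = x.totalVariation Set.univ → x' = x)) := by
  classical
  intro x' hx'
  set rp : Fin s → ℝ≥0 := fun m => Real.toNNReal (c m) with hrp
  set rn : Fin s → ℝ≥0 := fun m => Real.toNNReal (-(c m)) with hrn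
  set pd : Measure M := ∑ m, rp m • Measure.dirac (t m) with hpd
  set nd : Measure M := ∑ m, rn m • Measure.dirac (t m) with hnd
  have hrpn : ∀ m, (rp m : ℝ) - (rn m : ℝ) = c m := by
    intro m
    simp only [hrp, hrn, Real.coe_toNNReal']
    rcases le_total 0 (c m) with h | h
    · rw [max_eq_left h, max_eq_right (neg_nonpos.mpr h)]; ring
    · rw [max_eq_right h, max_eq_left (neg_nonneg.mpr h)]; ring
  have hsum_nn : ∀ m, rp m + rn m = Real.toNNReal |c m| := by
    intro m
    apply NNReal.coe_injective
    simp only [NNReal.coe_add, hrp, hrn, Real.coe_toNNReal']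
    rcases le_total 0 (c m) with h | h
    · rw [max_eq_left h, max_eq_right (neg_nonpos.mpr h), max_eq_left (abs_nonneg _),
        abs_of_nonneg h]; ring
    · rw [max_eq_right h, max_eq_left (neg_nonneg.mpr h), max_eq_left (abs_nonneg _),
        abs_of_nonpos h]; ring
  -- value of x on measurable sets
  have hxval : ∀ E : Set M, MeasurableSet E →
      x E = ∑ m, c m * (if t m ∈ E then 1 else 0) := by
    intro E hE
    rw [hx]
    have hcoe : (∑ m : Fin s, c m • (Measure.dirac (t m)).toSignedMeasure) E
        = ∑ m : Fin s, (c m • (Measure.dirac (t m)).toSignedMeasure) E := by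
      let ev : SignedMeasure M →+ ℝ :=
        { toFun := fun v => v E
          map_zero' := rfl
          map_add' := fun a b => VectorMeasure.add_apply a b E }
      exact map_sum ev _ _
    rw [hcoe]
    refine Finset.sum_congr rfl fun m _ => ?_
    rw [VectorMeasure.smul_apply, Measure.toSignedMeasure_apply_measurable hE,
      measureReal_def, Measure.dirac_apply' _ hE]
    by_cases h : t m ∈ E
    · rw [Set.indicator_of_mem h, if_pos h]
      simp
    · rw [Set.indicator_of_notMem h, if_neg h]
      simp
  -- x decomposes as pd - nd
  have hxd : x = pd.toSignedMeasure - nd.toSignedMeasure := by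
    refine VectorMeasure.ext fun E hE => ?_
    rw [VectorMeasure.sub_apply, Measure.toSignedMeasure_apply_measurable hE,
      Measure.toSignedMeasure_apply_measurable hE, hxval E hE,
      measureReal_def, measureReal_def, aux_dirac_sum_toReal rp t hE, aux_dirac_sum_toReal rn t hE, ← Finset.sum_sub_distrib]
    refine Finset.sum_congr rfl fun m _ => ?_
    rw [← sub_mul, hrpn m]
  -- sintegral of x against continuous functions
  have hsint : ∀ f : M → ℝ, Continuous f → sintegral x f = ∑ m, c m * f (t m) := by
    intro f hf
    rw [sintegral_eq_of_decomp x pd nd hxd (aux_integrable hf _) (aux_integrable hf _)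
      (aux_integrable hf _) (aux_integrable hf _)]
    have hint : ∀ r : Fin s → ℝ≥0,
        (∫ a, f a ∂(∑ m, r m • Measure.dirac (t m))) = ∑ m, (r m : ℝ) * f (t m) := by
      intro r
      rw [integral_finset_sum_measure (fun m _ => aux_integrable hf _)]
      refine Finset.sum_congr rfl fun m _ => ?_
      rw [integral_smul_nnreal_measure, integral_dirac]
      simp [NNReal.smul_def]
    rw [hint rp, hint rn, ← Finset.sum_sub_distrib]
    refine Finset.sum_congr rfl fun m _ => ?_
    rw [← sub_mul, hrpn m]
  -- Jordan decomposition of x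
  have hAfin : (t '' {m | 0 < c m}).Finite := Set.Finite.image _ (Set.toFinite _)
  have hAm : MeasurableSet (t '' {m | 0 < c m}) := hAfin.measurableSet
  have hsing : pd ⟂ₘ nd := by
    refine ⟨(t '' {m | 0 < c m})ᶜ, hAm.compl, ?_, ?_⟩
    · rw [hpd, aux_dirac_sum_apply rp t hAm.compl]
      refine Finset.sum_eq_zero fun m _ => ?_
      rcases lt_or_gt_of_ne (hc m) with h | h
      · have h0 : rp m = 0 := Real.toNNReal_of_nonpos h.le
        rw [h0]; simp
      · have hmem : t m ∈ t '' {m | 0 < c m} := ⟨m, h, rfl⟩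
        rw [if_neg (fun hcon => hcon hmem), mul_zero]
    · rw [compl_compl, hnd, aux_dirac_sum_apply rn t hAm]
      refine Finset.sum_eq_zero fun m _ => ?_
      rcases lt_or_gt_of_ne (hc m) with h | h
      · have hmem : t m ∉ t '' {m | 0 < c m} := by
          rintro ⟨m', hm', he⟩
          rw [ht he] at hm'
          exact absurd hm' (not_lt.mpr h.le)
        rw [if_neg hmem, mul_zero]
      · have h0 : rn m = 0 := Real.toNNReal_of_nonpos (neg_nonpos.mpr h.le)
        rw [h0]; simp
  have hjd : x.toJordanDecomposition
      = { posPart := pd, negPart := nd, mutuallySingular := hsing } := by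
    apply JordanDecomposition.toSignedMeasure_injective
    rw [x.toSignedMeasure_toJordanDecomposition]
    exact hxd
  -- total variation of x
  have htvx : x.totalVariation Set.univ = ENNReal.ofReal (∑ m, |c m|) := by
    rw [SignedMeasure.totalVariation, hjd]
    show (pd + nd) Set.univ = _
    rw [Measure.add_apply, hpd, hnd, aux_dirac_sum_apply rp t MeasurableSet.univ,
      aux_dirac_sum_apply rn t MeasurableSet.univ, ← Finset.sum_add_distrib,
      ENNReal.ofReal_sum_of_nonneg (fun i _ => abs_nonneg _)]
    refine Finset.sum_congr rfl fun m _ => ?_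
    simp only [Set.mem_univ, if_true, mul_one]
    rw [← ENNReal.coe_add, hsum_nn m]
    rfl
  -- linearity of sintegral in the function argument
  have hcontq : ∀ a : Fin D → ℝ, Continuous fun τ => ∑ k, a k * P k τ :=
    fun a => continuous_finset_sum _ fun k _ => continuous_const.mul (P k).continuous
  have hsint_lin : ∀ (y : SignedMeasure M) (a : Fin D → ℝ),
      sintegral y (fun τ => ∑ k, a k * P k τ) = ∑ k, a k * sintegral y (P k) := by
    intro y a
    have hi : ∀ (μ : Measure M) [IsFiniteMeasure μ],
        (∫ τ, (∑ k, a k * P k τ) ∂μ) = ∑ k, a k * ∫ τ, P k τ ∂μ := by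
      intro μ _
      rw [integral_finset_sum _
        (fun k _ => aux_integrable (f := fun τ => a k * P k τ) (continuous_const.mul (P k).continuous) μ)]
      exact Finset.sum_congr rfl fun k _ => integral_const_mul _ _
    simp only [sintegral, hi, ← Finset.sum_sub_distrib]
    exact Finset.sum_congr rfl fun k _ => (mul_sub _ _ _).symm
  -- packaged certificate facts
  have hkey : ∀ u : Fin s → ℝ, (∀ m, u m = 1 ∨ u m = -1) →
      ∃ q : M → ℝ, Continuous q ∧ (∀ m, q (t m) = u m) ∧
        (∀ τ, τ ∉ Set.range t → |q τ| < 1) ∧ (∀ τ, |q τ| ≤ 1) ∧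
        sintegral x' q = ∑ m, c m * u m := by
    intro u hu
    obtain ⟨a, ha1, ha2⟩ := hcert u hu
    refine ⟨fun τ => ∑ k, a k * P k τ, hcontq a, ha1, ha2, ?_, ?_⟩
    · intro τ
      by_cases hτ : τ ∈ Set.range t
      · obtain ⟨m, rfl⟩ := hτ
        simp only [ha1 m]
        rcases hu m with h | h <;> simp [h]
      · exact (ha2 τ hτ).le
    · rw [hsint_lin x' a, Finset.sum_congr rfl fun k _ => by rw [hx' k],
        ← hsint_lin x a, hsint _ (hcontq a)]
      exact Finset.sum_congr rfl fun m _ => by rw [ha1 m]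
  -- the canonical sign pattern
  have hu₀ : ∀ m, (if 0 < c m then (1:ℝ) else -1) = 1 ∨ (if 0 < c m then (1:ℝ) else -1) = -1 := by
    intro m; by_cases h : 0 < c m <;> simp [h]
  obtain ⟨q, hqc, hq1, hq2, hq3, hq4⟩ := hkey _ hu₀
  have hqx' : sintegral x' q = ∑ m, |c m| := by
    rw [hq4]
    refine Finset.sum_congr rfl fun m _ => ?_
    by_cases h : 0 < c m
    · simp [h, abs_of_pos h]
    · have hlt : c m < 0 := lt_of_le_of_ne (not_lt.mp h) (hc m)
      simp [h, abs_of_neg hlt]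
  set P' := x'.toJordanDecomposition.posPart with hP'
  set N' := x'.toJordanDecomposition.negPart with hN'
  have hsx'def : sintegral x' q = (∫ a, q a ∂P') - ∫ a, q a ∂N' := rfl
  have hb1 : (∫ a, q a ∂P') ≤ (P' Set.univ).toReal := by
    calc (∫ a, q a ∂P') ≤ ∫ _, (1:ℝ) ∂P' :=
          integral_mono (aux_integrable hqc _) (integrable_const 1)
            (fun τ => (abs_le.1 (hq3 τ)).2)
      _ = (P' Set.univ).toReal := by simp [measureReal_def]
  have hb2 : -(N' Set.univ).toReal ≤ ∫ a, q a ∂N' := by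
    calc -(N' Set.univ).toReal = ∫ _, (-1:ℝ) ∂N' := by simp [measureReal_def]
      _ ≤ ∫ a, q a ∂N' :=
          integral_mono (integrable_const (-1)) (aux_integrable hqc _)
            (fun τ => (abs_le.1 (hq3 τ)).1)
  have htv' : x'.totalVariation Set.univ = P' Set.univ + N' Set.univ := by
    rw [SignedMeasure.totalVariation, Measure.add_apply]
  have hSle : (∑ m, |c m|) ≤ (P' Set.univ).toReal + (N' Set.univ).toReal := by
    have h0 := hqx'
    rw [hsx'def] at h0
    linarith
  constructor
  · rw [htvx, htv']
    refine ENNReal.ofReal_le_of_le_toReal ?_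
    rw [ENNReal.toReal_add (measure_ne_top _ _) (measure_ne_top _ _)]
    exact hSle
  · intro heq
    have hS0 : (0:ℝ) ≤ ∑ m, |c m| := Finset.sum_nonneg fun m _ => abs_nonneg _
    have heqr : (P' Set.univ).toReal + (N' Set.univ).toReal = ∑ m, |c m| := by
      rw [htvx, htv'] at heq
      have h2 := congrArg ENNReal.toReal heq
      rwa [ENNReal.toReal_add (measure_ne_top _ _) (measure_ne_top _ _),
        ENNReal.toReal_ofReal hS0] at h2
    have h0 := hqx'
    rw [hsx'def] at h0
    have he1 : (∫ a, q a ∂P') = (P' Set.univ).toReal := by linarith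
    have he2 : (∫ a, q a ∂N') = -(N' Set.univ).toReal := by linarith
    -- the Jordan parts of x' vanish off the support
    have hP'null : P' (Set.range t)ᶜ = 0 := by
      have hint : Integrable (fun τ => 1 - q τ) P' :=
        (integrable_const 1).sub (aux_integrable hqc _)
      have hz : (∫ τ, (1 - q τ) ∂P') = 0 := by
        rw [integral_sub (integrable_const 1) (aux_integrable hqc _), he1]
        simp [measureReal_def]
      have hae := (integral_eq_zero_iff_of_nonneg
        (fun τ => by have := (abs_le.1 (hq3 τ)).2; simp only [Pi.zero_apply]; linarith)
        hint).mp hz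
      refine measure_mono_null ?_ (ae_iff.mp hae)
      intro τ hτ
      have hlt := hq2 τ hτ
      have : q τ < 1 := (abs_lt.1 hlt).2
      simp only [Set.mem_setOf_eq, Pi.zero_apply]
      intro h
      nlinarith
    have hN'null : N' (Set.range t)ᶜ = 0 := by
      have hint : Integrable (fun τ => 1 + q τ) N' :=
        (integrable_const 1).add (aux_integrable hqc _)
      have hz : (∫ τ, (1 + q τ) ∂N') = 0 := by
        rw [integral_add (integrable_const 1) (aux_integrable hqc _), he2]
        simp [measureReal_def]
      have hae := (integral_eq_zero_iff_of_nonneg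
        (fun τ => by have := (abs_le.1 (hq3 τ)).1; simp only [Pi.zero_apply]; linarith)
        hint).mp hz
      refine measure_mono_null ?_ (ae_iff.mp hae)
      intro τ hτ
      have hlt := hq2 τ hτ
      have : -1 < q τ := (abs_lt.1 hlt).1
      simp only [Set.mem_setOf_eq, Pi.zero_apply]
      intro h
      nlinarith
    -- sintegral of x' against continuous functions
    have hx'sint : ∀ f : M → ℝ, Continuous f →
        sintegral x' f = ∑ m, ((P' {t m}).toReal - (N' {t m}).toReal) * f (t m) := by
      intro f hf
      show (∫ a, f a ∂P') - (∫ a, f a ∂N') = _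
      rw [aux_integral_concentrated t ht hP'null (aux_integrable hf _),
        aux_integral_concentrated t ht hN'null (aux_integrable hf _),
        ← Finset.sum_sub_distrib]
      exact Finset.sum_congr rfl fun m _ => (sub_mul _ _ _).symm
    -- the atoms of x' agree with those of x
    have hcc : ∀ m, (P' {t m}).toReal - (N' {t m}).toReal = c m := by
      intro m₀
      have key : ∀ u : Fin s → ℝ, (∀ m, u m = 1 ∨ u m = -1) →
          (∑ m, u m * ((P' {t m}).toReal - (N' {t m}).toReal)) = ∑ m, u m * c m := by
        intro u hu
        obtain ⟨q', hq'c, hq'1, _, _, hq'4⟩ := hkey u hu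
        have h1 := hx'sint q' hq'c
        rw [hq'4] at h1
        calc (∑ m, u m * ((P' {t m}).toReal - (N' {t m}).toReal))
            = ∑ m, ((P' {t m}).toReal - (N' {t m}).toReal) * q' (t m) := by
              refine Finset.sum_congr rfl fun m _ => ?_
              rw [hq'1 m]; ring
          _ = ∑ m, c m * u m := h1.symm
          _ = ∑ m, u m * c m := Finset.sum_congr rfl fun m _ => mul_comm _ _
      have A := key (fun _ => 1) (fun _ => Or.inl rfl)
      have B := key (fun m => if m = m₀ then -1 else 1)
        (fun m => by by_cases h : m = m₀ <;> simp [h])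
      have e : ∀ g : Fin s → ℝ,
          (∑ m, (if m = m₀ then (2:ℝ) else 0) * g m)
            = (∑ m, (1:ℝ) * g m) - ∑ m, (if m = m₀ then (-1:ℝ) else 1) * g m := by
        intro g
        rw [← Finset.sum_sub_distrib]
        refine Finset.sum_congr rfl fun m _ => ?_
        by_cases h : m = m₀ <;> simp [h] <;> ring
      have h2 : (∑ m, (if m = m₀ then (2:ℝ) else 0) * ((P' {t m}).toReal - (N' {t m}).toReal))
          = ∑ m, (if m = m₀ then (2:ℝ) else 0) * c m := by
        rw [e, e, A, B]
      simp only [ite_mul, zero_mul, Finset.sum_ite_eq', Finset.mem_univ, if_true] at h2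
      linarith
    -- conclude
    refine VectorMeasure.ext fun E hE => ?_
    have hx'E : x' E = (P' E).toReal - (N' E).toReal := by
      conv_lhs => rw [← x'.toSignedMeasure_toJordanDecomposition]
      exact Measure.toSignedMeasure_sub_apply hE
    rw [hx'E, hxval E hE, aux_meas_val t ht hP'null E, aux_meas_val t ht hN'null E,
      ← Finset.sum_sub_distrib]
    refine Finset.sum_congr rfl fun m _ => ?_
    rw [← sub_mul, hcc m]
end

section
/- Combining the non-negative dual certificate criterion with the explicit product construction: any Dirac ensemble x = Σ_{m=1}^s c_m δ_{t_m} on the circle ℝ/2πℤ with all c_m > 0, distinct t_m, and s ≤ N is the unique signed Borel measure minimizing TV norm subject to matching the Fourier coefficients ⟨x̃, e^{ikt}⟩ for |k| ≤ N. -/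
open MeasureTheory Real
open scoped ENNReal

/-- Integral of a complex function against a signed measure, via the Jordan decomposition. -/
noncomputable def csintegral {M : Type*} [MeasurableSpace M]
    (μ : SignedMeasure M) (f : M → ℂ) : ℂ :=
  (∫ x, f x ∂μ.toJordanDecomposition.posPart) - (∫ x, f x ∂μ.toJordanDecomposition.negPart)

section Aux

variable [hT : Fact (0 < 2 * π)]

/-- Trigonometric polynomials of degree at most `n`. -/
noncomputable def tspan (n : ℕ) : Submodule ℂ C(AddCircle (2 * π), ℂ) :=
  Submodule.span ℂ {f | ∃ k : ℤ, |k| ≤ (n : ℤ) ∧ f = fourier k}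

lemma fourier_mem_tspan {n : ℕ} {k : ℤ} (h : |k| ≤ (n : ℤ)) : fourier k ∈ tspan n :=
  Submodule.subset_span ⟨k, h, rfl⟩

lemma tspan_mono {a b : ℕ} (h : a ≤ b) : tspan a ≤ tspan b :=
  Submodule.span_mono fun f ⟨k, hk, hf⟩ => ⟨k, hk.trans (by exact_mod_cast h), hf⟩

lemma tspan_mul {a b : ℕ} {f g : C(AddCircle (2 * π), ℂ)} (hf : f ∈ tspan a)
    (hg : g ∈ tspan b) : f * g ∈ tspan (a + b) := by
  induction hf using Submodule.span_induction with
  | mem f hf =>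
    obtain ⟨k, hk, rfl⟩ := hf
    induction hg using Submodule.span_induction with
    | mem g hg =>
      obtain ⟨l, hl, rfl⟩ := hg
      have he : (fourier k * fourier l : C(AddCircle (2 * π), ℂ)) = fourier (k + l) := by
        ext y
        simp [fourier_add]
      rw [he]
      refine fourier_mem_tspan ?_
      push_cast
      calc |k + l| ≤ |k| + |l| := abs_add_le _ _
        _ ≤ (a : ℤ) + (b : ℤ) := add_le_add hk hl
    | zero => rw [mul_zero]; exact zero_mem _
    | add g₁ g₂ _ _ h1 h2 => rw [mul_add]; exact add_mem h1 h2
    | smul r g _ h1 => rw [mul_smul_comm]; exact Submodule.smul_mem _ _ h1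
  | zero => rw [zero_mul]; exact zero_mem _
  | add f₁ f₂ _ _ h1 h2 => rw [add_mul]; exact add_mem h1 h2
  | smul r f _ h1 => rw [smul_mul_assoc]; exact Submodule.smul_mem _ _ h1

lemma tspan_prod {ι : Type*} [DecidableEq ι] (S : Finset ι) (h : ι → C(AddCircle (2 * π), ℂ))
    (hh : ∀ m, h m ∈ tspan 1) : (∏ m ∈ S, h m) ∈ tspan S.card := by
  induction S using Finset.induction_on with
  | empty =>
    have he : (1 : C(AddCircle (2 * π), ℂ)) = fourier 0 := by ext y; simp
    simpa [he] using fourier_mem_tspan (n := 0) (k := 0) (by simp)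
  | insert _ _ hm ih =>
    rw [Finset.prod_insert hm, Finset.card_insert_of_notMem hm, add_comm]
    exact tspan_mul (hh _) ih

lemma cont_integrable {E : Type*} [NormedAddCommGroup E] (ν : Measure (AddCircle (2 * π)))
    [IsFiniteMeasure ν] (f : C(AddCircle (2 * π), E)) : Integrable f ν :=
  f.continuous.integrable_of_hasCompactSupport (HasCompactSupport.of_compactSpace f)

lemma csintegral_zero' (μ : SignedMeasure (AddCircle (2 * π))) :
    csintegral μ (fun _ => (0 : ℂ)) = 0 := by
  simp [csintegral]

lemma csintegral_smul (μ : SignedMeasure (AddCircle (2 * π))) (f : AddCircle (2 * π) → ℂ)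
    (a : ℂ) : csintegral μ (a • f) = a * csintegral μ f := by
  simp only [csintegral, Pi.smul_apply, smul_eq_mul, integral_const_mul]
  ring

lemma csintegral_add (μ : SignedMeasure (AddCircle (2 * π))) (f g : C(AddCircle (2 * π), ℂ)) :
    csintegral μ (⇑f + ⇑g) = csintegral μ f + csintegral μ g := by
  simp only [csintegral, Pi.add_apply,
    integral_add (cont_integrable _ f) (cont_integrable _ g)]
  ring

lemma csintegral_congr_on_span {x x' : SignedMeasure (AddCircle (2 * π))} {n : ℕ}
    (h : ∀ k : ℤ, |k| ≤ (n : ℤ) → csintegral x' (fourier k) = csintegral x (fourier k))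
    {f : C(AddCircle (2 * π), ℂ)} (hf : f ∈ tspan n) :
    csintegral x' ⇑f = csintegral x ⇑f := by
  induction hf using Submodule.span_induction with
  | mem f hf => obtain ⟨k, hk, rfl⟩ := hf; exact h k hk
  | zero =>
    rw [ContinuousMap.coe_zero]
    show csintegral x' (fun _ => (0:ℂ)) = csintegral x (fun _ => (0:ℂ))
    rw [csintegral_zero', csintegral_zero']
  | add f g _ _ h1 h2 =>
    rw [ContinuousMap.coe_add, csintegral_add, csintegral_add, h1, h2]
  | smul r f _ h1 =>
    rw [ContinuousMap.coe_smul, csintegral_smul, csintegral_smul, h1]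

lemma integral_pm {s : ℕ} (w : Fin s → ℝ≥0∞) (hw : ∀ m, w m ≠ ⊤)
    (t : Fin s → AddCircle (2 * π)) (f : C(AddCircle (2 * π), ℂ)) :
    ∫ y, f y ∂(∑ m : Fin s, w m • Measure.dirac (t m) : Measure (AddCircle (2 * π))) =
      ∑ m : Fin s, (w m).toReal • f (t m) := by
  have hfin : ∀ m, IsFiniteMeasure (w m • Measure.dirac (t m)) := fun m =>
    ⟨by
      rw [Measure.smul_apply, smul_eq_mul]
      exact ENNReal.mul_lt_top (hw m).lt_top (by simp)⟩
  rw [integral_finset_sum_measure (fun m _ => by haveI := hfin m; exact cont_integrable _ f)]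
  refine Finset.sum_congr rfl fun m _ => ?_
  rw [integral_smul_measure, integral_dirac]

lemma signed_sum_apply {ι M : Type*} [MeasurableSpace M] (S : Finset ι)
    (v : ι → SignedMeasure M) (A : Set M) : (∑ m ∈ S, v m) A = ∑ m ∈ S, v m A := by
  classical
  induction S using Finset.cons_induction with
  | empty => simp
  | cons m S hm ih => rw [Finset.sum_cons, VectorMeasure.add_apply, ih, Finset.sum_cons]

lemma jordan_of_measure {M : Type*} [MeasurableSpace M] (μ : Measure M) [IsFiniteMeasure μ] :
    μ.toSignedMeasure.toJordanDecomposition.posPart = μ ∧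
      μ.toSignedMeasure.toJordanDecomposition.negPart = 0 := by
  let J : JordanDecomposition M :=
    ⟨μ, 0, Measure.MutuallySingular.zero_right⟩
  have hJ : J.toSignedMeasure = μ.toSignedMeasure := by
    show μ.toSignedMeasure - (0 : Measure M).toSignedMeasure = μ.toSignedMeasure
    rw [Measure.toSignedMeasure_zero, sub_zero]
  have h2 := congrArg SignedMeasure.toJordanDecomposition hJ
  rw [JordanDecomposition.toJordanDecomposition_toSignedMeasure] at h2
  exact ⟨by rw [← h2], by rw [← h2]⟩

end Aux

/-- a non-negative Dirac ensemble on the circle `ℝ/2πℤ` with `s ≤ N` spikes is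
the unique TV-minimizer among signed Borel measures matching its Fourier coefficients of
order `|k| ≤ N`. -/
theorem nonneg_sparse_measure_unique_tv_min [hT : Fact (0 < 2 * π)]
    {s N : ℕ} (hsN : s ≤ N)
    (t : Fin s → AddCircle (2 * π)) (c : Fin s → ℝ)
    (ht : Function.Injective t) (hc : ∀ m, 0 < c m)
    (x : SignedMeasure (AddCircle (2 * π)))
    (hx : x = ∑ m : Fin s, c m • (Measure.dirac (t m)).toSignedMeasure) :
    ∀ x' : SignedMeasure (AddCircle (2 * π)),
      (∀ k : ℤ, |k| ≤ (N : ℤ) → csintegral x' (fourier k) = csintegral x (fourier k)) →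
      (x.totalVariation Set.univ ≤ x'.totalVariation Set.univ ∧
        (x'.totalVariation Set.univ = x.totalVariation Set.univ → x' = x)) := by
  classical
  intro x' hmom
  -- the point-mass measure
  set μx : Measure (AddCircle (2 * π)) :=
    ∑ m : Fin s, ENNReal.ofReal (c m) • Measure.dirac (t m) with hμx
  have hμxA : ∀ A : Set (AddCircle (2 * π)), MeasurableSet A →
      μx A = ∑ m : Fin s, ENNReal.ofReal (c m) * A.indicator 1 (t m) := by
    intro A hA
    rw [hμx, Measure.finset_sum_apply]
    exact Finset.sum_congr rfl fun m _ => by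
      rw [Measure.smul_apply, Measure.dirac_apply' _ hA, smul_eq_mul]
  haveI hfinμx : IsFiniteMeasure μx := by
    constructor
    rw [hμxA _ MeasurableSet.univ]
    exact ENNReal.sum_lt_top.2 fun m _ => by
      simp [ENNReal.ofReal_lt_top, ENNReal.mul_lt_top, ENNReal.ofReal_ne_top]
  -- x is the signed measure of μx
  have hxs : x = μx.toSignedMeasure := by
    rw [hx]
    ext A hA
    rw [signed_sum_apply, Measure.toSignedMeasure_apply_measurable hA, measureReal_def, hμxA A hA,
      ENNReal.toReal_sum (fun m _ => ENNReal.mul_ne_top ENNReal.ofReal_ne_top (by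
        by_cases h : t m ∈ A <;> simp [Set.indicator_apply, h]))]
    refine Finset.sum_congr rfl fun m _ => ?_
    rw [VectorMeasure.smul_apply, Measure.toSignedMeasure_apply_measurable hA,
      measureReal_def, Measure.dirac_apply' _ hA, ENNReal.toReal_mul, ENNReal.toReal_ofReal (hc m).le]
    by_cases h : t m ∈ A <;> simp [Set.indicator_apply, h, smul_eq_mul]
  have hjx := jordan_of_measure μx
  have hjxp : x.toJordanDecomposition.posPart = μx := by rw [hxs]; exact hjx.1
  have hjxn : x.toJordanDecomposition.negPart = 0 := by rw [hxs]; exact hjx.2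
  -- total mass
  set C : ℝ := ∑ m : Fin s, c m with hC
  have hC0 : 0 ≤ C := Finset.sum_nonneg fun m _ => (hc m).le
  have hμxuniv : μx Set.univ = ENNReal.ofReal C := by
    rw [hμxA _ MeasurableSet.univ, hC, ENNReal.ofReal_sum_of_nonneg fun m _ => (hc m).le]
    simp
  have hTVx : x.totalVariation Set.univ = ENNReal.ofReal C := by
    rw [SignedMeasure.totalVariation, Measure.add_apply, hjxp, hjxn, hμxuniv]
    simp
  -- csintegral of x against continuous maps
  have hxint : ∀ f : C(AddCircle (2 * π), ℂ),
      csintegral x ⇑f = ∑ m : Fin s, c m • f (t m) := by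
    intro f
    rw [csintegral, hjxp, hjxn, integral_zero_measure, sub_zero, hμx,
      integral_pm _ (fun m => ENNReal.ofReal_ne_top) t f]
    exact Finset.sum_congr rfl fun m _ => by rw [ENNReal.toReal_ofReal (hc m).le]
  -- positive and negative parts of x'
  set p : Measure (AddCircle (2 * π)) := x'.toJordanDecomposition.posPart with hp
  set n : Measure (AddCircle (2 * π)) := x'.toJordanDecomposition.negPart with hn
  have hTVx' : x'.totalVariation Set.univ = p Set.univ + n Set.univ := by
    rw [SignedMeasure.totalVariation, Measure.add_apply]
  have hpfin : p Set.univ ≠ ⊤ := measure_ne_top _ _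
  have hnfin : n Set.univ ≠ ⊤ := measure_ne_top _ _
  -- zeroth moment
  have hmom0 : (p Set.univ).toReal - (n Set.univ).toReal = C := by
    have h0 := hmom 0 (by simp)
    have h1 : (fourier 0 : C(AddCircle (2 * π), ℂ)) = ContinuousMap.const _ 1 := by
      ext y; simp
    rw [hxint (fourier 0)] at h0
    have h2 : csintegral x' (fourier 0) = (((p Set.univ).toReal - (n Set.univ).toReal : ℝ) : ℂ) := by
      rw [csintegral, ← hp, ← hn]
      have : ∀ ν : Measure (AddCircle (2 * π)),
          ∫ y, (fourier 0 : C(AddCircle (2 * π), ℂ)) y ∂ν = ((ν Set.univ).toReal : ℂ) := by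
        intro ν
        simp [h1, integral_const, measureReal_def]
      rw [this p, this n]
      push_cast
      ring
    rw [h2] at h0
    have h3 : (∑ m : Fin s, c m • (fourier 0) (t m) : ℂ) = (C : ℂ) := by
      rw [hC]
      push_cast
      refine Finset.sum_congr rfl fun m _ => by simp
    rw [h3] at h0
    exact_mod_cast h0
  refine ⟨?_, ?_⟩
  · -- minimality
    rw [hTVx, hTVx']
    calc ENNReal.ofReal C = ENNReal.ofReal ((p Set.univ).toReal - (n Set.univ).toReal) := by
          rw [hmom0]
      _ ≤ ENNReal.ofReal ((p Set.univ).toReal) :=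
          ENNReal.ofReal_le_ofReal (by simp [ENNReal.toReal_nonneg])
      _ = p Set.univ := ENNReal.ofReal_toReal hpfin
      _ ≤ p Set.univ + n Set.univ := le_self_add
  · -- uniqueness
    intro hTVeq
    rw [hTVx', hTVx] at hTVeq
    have hsum : (p Set.univ).toReal + (n Set.univ).toReal = C := by
      have h1 := congrArg ENNReal.toReal hTVeq
      rwa [ENNReal.toReal_add hpfin hnfin, ENNReal.toReal_ofReal hC0] at h1
    have hn0' : n Set.univ = 0 := by
      have h1 : (n Set.univ).toReal = 0 := by linarith
      exact (ENNReal.toReal_eq_zero_iff _).1 h1 |>.resolve_right hnfin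
    have hn0 : n = 0 := Measure.measure_univ_eq_zero.1 hn0'
    have hx'int : ∀ f : C(AddCircle (2 * π), ℂ), csintegral x' ⇑f = ∫ y, f y ∂p := by
      intro f
      rw [csintegral, ← hp, ← hn, hn0, integral_zero_measure, sub_zero]
    have hkey : ∀ f : C(AddCircle (2 * π), ℂ), f ∈ tspan N →
        ∫ y, f y ∂p = ∑ m : Fin s, c m • f (t m) := by
      intro f hf
      rw [← hx'int f, csintegral_congr_on_span hmom hf, hxint f]
    -- injectivity of the first Fourier mode
    have hfinj : ∀ y z : AddCircle (2 * π), (fourier 1 y : ℂ) = fourier 1 z → y = z := by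
      intro y z hyz
      apply AddCircle.injective_toCircle (by positivity : (2 * π : ℝ) ≠ 0)
      rw [fourier_one, fourier_one] at hyz
      exact Circle.coe_injective hyz
    -- certificate factors
    set h : Fin s → C(AddCircle (2 * π), ℂ) := fun m =>
      (2 : ℂ) • (fourier 0) - (starRingEnd ℂ (fourier 1 (t m))) • fourier 1 -
        (fourier 1 (t m)) • fourier (-1) with hhdef
    have hmem1 : ∀ m, h m ∈ tspan 1 := by
      intro m
      refine sub_mem (sub_mem (Submodule.smul_mem _ _ (fourier_mem_tspan ?_))
        (Submodule.smul_mem _ _ (fourier_mem_tspan ?_)))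
        (Submodule.smul_mem _ _ (fourier_mem_tspan ?_)) <;> simp
    have hnorm1 : ∀ y : AddCircle (2 * π),
        (fourier 1 y : ℂ) * (starRingEnd ℂ) (fourier 1 y) = 1 := by
      intro y
      rw [Complex.mul_conj, Complex.normSq_eq_norm_sq]
      have : ‖(fourier 1 y : ℂ)‖ = 1 := by
        rw [fourier_one]; exact Circle.norm_coe _
      rw [this]
      norm_num
    have hval : ∀ m y, (h m) y =
        (fourier 1 y - fourier 1 (t m)) * (starRingEnd ℂ) (fourier 1 y - fourier 1 (t m)) := by
      intro m y
      simp only [hhdef, ContinuousMap.sub_apply, ContinuousMap.smul_apply, smul_eq_mul,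
        fourier_zero, map_sub]
      have hm1 : (fourier (-1 : ℤ) y : ℂ) = (starRingEnd ℂ) (fourier 1 y) := fourier_neg
      rw [hm1]
      linear_combination - hnorm1 y - hnorm1 (t m)
    have hval_norm : ∀ m y, (h m) y = ((‖(fourier 1 y : ℂ) - fourier 1 (t m)‖ ^ 2 : ℝ) : ℂ) := by
      intro m y
      rw [hval m y, Complex.mul_conj, Complex.normSq_eq_norm_sq]
    have hprod : ∀ (S : Finset (Fin s)) (y : AddCircle (2 * π)),
        (∏ m ∈ S, h m) y =
          ((∏ m ∈ S, ‖(fourier 1 y : ℂ) - fourier 1 (t m)‖ ^ 2 : ℝ) : ℂ) := by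
      intro S y
      rw [ContinuousMap.prod_apply, Complex.ofReal_prod]
      exact Finset.prod_congr rfl fun m _ => hval_norm m y
    -- the full certificate has zero integral against p
    have hcard : (Finset.univ : Finset (Fin s)).card = s := by simp
    have hqmem : (∏ m : Fin s, h m) ∈ tspan N :=
      tspan_mono hsN (by simpa [hcard] using tspan_prod Finset.univ h hmem1)
    have hqzero : ∀ j : Fin s, (∏ m : Fin s, h m) (t j) = 0 := by
      intro j
      rw [hprod]
      rw [Complex.ofReal_eq_zero]
      exact Finset.prod_eq_zero (Finset.mem_univ j) (by simp)
    have hint0 : ∫ y, (∏ m : Fin s, h m) y ∂p = 0 := by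
      rw [hkey _ hqmem]
      exact Finset.sum_eq_zero fun j _ => by rw [hqzero j, smul_zero]
    -- real-valued version
    set rfun : C(AddCircle (2 * π), ℝ) :=
      ⟨fun y => ∏ m : Fin s, ‖(fourier 1 y : ℂ) - fourier 1 (t m)‖ ^ 2, by
        refine continuous_finset_prod _ fun m _ => ?_
        exact (((fourier 1).continuous.sub continuous_const).norm.pow 2)⟩ with hrdef
    have hrfun_apply : ∀ y, rfun y = ∏ m : Fin s, ‖(fourier 1 y : ℂ) - fourier 1 (t m)‖ ^ 2 :=
      fun y => rfl
    have hrint0 : ∫ y, rfun y ∂p = 0 := by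
      have h4 : ∫ y, ((∏ m : Fin s, h m) y).re ∂p = (∫ y, (∏ m : Fin s, h m) y ∂p).re :=
        Complex.reCLM.integral_comp_comm (cont_integrable p _)
      rw [hint0] at h4
      have h5 : (fun y => ((∏ m : Fin s, h m) y).re) = fun y => rfun y := by
        funext y
        rw [hprod Finset.univ y, hrfun_apply, Complex.ofReal_re]
      rw [h5] at h4
      simpa using h4
    have hrnonneg : (0 : AddCircle (2 * π) → ℝ) ≤ fun y => rfun y := by
      intro y
      simp only [Pi.zero_apply]
      rw [hrfun_apply]
      positivity
    have hae : (fun y => rfun y) =ᵐ[p] 0 :=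
      (integral_eq_zero_iff_of_nonneg hrnonneg (cont_integrable p rfun)).1 hrint0
    have hnull : p {y | rfun y ≠ 0} = 0 := by
      have := hae
      rw [Filter.EventuallyEq, ae_iff] at this
      simpa using this
    have hrange : {y | rfun y ≠ 0} = (Set.range t)ᶜ := by
      ext y
      simp only [Set.mem_setOf_eq, Set.mem_compl_iff, Set.mem_range, not_exists]
      rw [hrfun_apply]
      constructor
      · intro hne m hm
        apply hne
        refine Finset.prod_eq_zero (Finset.mem_univ m) ?_
        rw [hm]
        simp
      · intro hall
        rw [Finset.prod_ne_zero_iff]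
        intro m _
        have hne : (fourier 1 y : ℂ) ≠ fourier 1 (t m) := by
          intro hcon
          exact hall m (hfinj _ _ hcon.symm)
        intro hcon
        have hz : (fourier 1 y : ℂ) - fourier 1 (t m) = 0 :=
          norm_eq_zero.1 (pow_eq_zero_iff (n := 2) (by norm_num) |>.1 hcon)
        exact hne (sub_eq_zero.1 hz)
    have hprange : p (Set.range t)ᶜ = 0 := by rw [← hrange]; exact hnull
    set b : Fin s → ℝ≥0∞ := fun m => p {t m} with hbdef
    have hbfin : ∀ m, b m ≠ ⊤ := fun m => measure_ne_top _ _
    have hpeq : p = ∑ m : Fin s, b m • Measure.dirac (t m) := by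
      ext A hA
      have hmr : MeasurableSet (Set.range t) := (Set.finite_range t).measurableSet
      have hAdiff : p (A \ Set.range t) = 0 :=
        measure_mono_null (fun y hy => hy.2) hprange
      have hsplit : p A = p (A ∩ Set.range t) := by
        rw [← measure_inter_add_diff A hmr, hAdiff, add_zero]
      have hun : A ∩ Set.range t =
          ⋃ m ∈ Finset.filter (fun m => t m ∈ A) Finset.univ, {t m} := by
        ext y
        simp only [Set.mem_inter_iff, Set.mem_range, Set.mem_iUnion, Finset.mem_filter,
          Finset.mem_univ, true_and, Set.mem_singleton_iff]
        constructor
        · rintro ⟨hyA, m, rfl⟩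
          exact ⟨m, hyA, rfl⟩
        · rintro ⟨m, hmA, rfl⟩
          exact ⟨hmA, m, rfl⟩
      have hdisj : (↑(Finset.filter (fun m => t m ∈ A) Finset.univ) : Set (Fin s)).PairwiseDisjoint
          (fun m => ({t m} : Set (AddCircle (2 * π)))) := by
        intro i _ j _ hij
        exact Set.disjoint_singleton.2 fun hcon => hij (ht hcon)
      rw [hsplit, hun, measure_biUnion_finset hdisj (fun m _ => measurableSet_singleton _),
        Measure.finset_sum_apply, Finset.sum_filter]
      refine Finset.sum_congr rfl fun m _ => ?_
      rw [Measure.smul_apply, Measure.dirac_apply' _ hA, smul_eq_mul]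
      by_cases hmA : t m ∈ A
      · simp [Set.indicator_apply, hmA, hbdef]
      · simp [Set.indicator_apply, hmA]
    -- identify the coefficients via interpolating certificates
    have hbm : ∀ m, (b m).toReal = c m := by
      intro m
      set qm : C(AddCircle (2 * π), ℂ) := ∏ j ∈ Finset.univ.erase m, h j with hqm
      have hqmmem : qm ∈ tspan N := by
        refine tspan_mono ?_ (tspan_prod _ h hmem1)
        calc (Finset.univ.erase m).card ≤ Finset.univ.card :=
              Finset.card_le_card (Finset.erase_subset _ _)
          _ = s := hcard
          _ ≤ N := hsN
      have hqmz : ∀ j, j ≠ m → qm (t j) = 0 := by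
        intro j hj
        rw [hqm, hprod, Complex.ofReal_eq_zero]
        exact Finset.prod_eq_zero (Finset.mem_erase.2 ⟨hj, Finset.mem_univ j⟩) (by simp)
      set w : ℝ := ∏ j ∈ Finset.univ.erase m, ‖(fourier 1 (t m) : ℂ) - fourier 1 (t j)‖ ^ 2
        with hw
      have hqmtm : qm (t m) = (w : ℂ) := by rw [hqm, hprod, hw]
      have hwne : w ≠ 0 := by
        rw [hw]
        refine Finset.prod_ne_zero_iff.2 fun j hj => ?_
        have hjm : j ≠ m := (Finset.mem_erase.1 hj).1
        have hne : (fourier 1 (t m) : ℂ) ≠ fourier 1 (t j) :=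
          fun hcon => hjm ((ht (hfinj _ _ hcon)).symm)
        exact pow_ne_zero _ (norm_ne_zero_iff.2 (sub_ne_zero.2 hne))
      have h1 := hkey qm hqmmem
      have h2 : ∫ y, qm y ∂p = ∑ j : Fin s, (b j).toReal • qm (t j) := by
        conv_lhs => rw [hpeq]
        exact integral_pm b hbfin t qm
      rw [h2] at h1
      have hLHS : ∑ j : Fin s, (b j).toReal • qm (t j) = ((b m).toReal : ℂ) * w := by
        rw [Finset.sum_eq_single m]
        · rw [hqmtm, Complex.real_smul]
        · intro j _ hj
          rw [hqmz j hj, smul_zero]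
        · exact fun hcon => absurd (Finset.mem_univ m) hcon
      have hRHS : ∑ j : Fin s, c j • qm (t j) = ((c m : ℝ) : ℂ) * w := by
        rw [Finset.sum_eq_single m]
        · rw [hqmtm, Complex.real_smul]
        · intro j _ hj
          rw [hqmz j hj, smul_zero]
        · exact fun hcon => absurd (Finset.mem_univ m) hcon
      rw [hLHS, hRHS] at h1
      have h4 : ((b m).toReal : ℂ) = ((c m : ℝ) : ℂ) :=
        mul_right_cancel₀ (by exact_mod_cast hwne) h1
      exact_mod_cast h4
    have hpμx : p = μx := by
      rw [hpeq, hμx]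
      refine Finset.sum_congr rfl fun m _ => ?_
      have hb : b m = ENNReal.ofReal (c m) := by
        rw [← hbm m, ENNReal.ofReal_toReal (hbfin m)]
      rw [hb]
    have h6 : x'.toJordanDecomposition.toSignedMeasure = x' :=
      x'.toSignedMeasure_toJordanDecomposition
    have h8 : n.toSignedMeasure = 0 := by
      ext A hA
      rw [Measure.toSignedMeasure_apply_measurable hA, hn0]
      simp
    have h7 : x'.toJordanDecomposition.toSignedMeasure = p.toSignedMeasure := by
      show p.toSignedMeasure - n.toSignedMeasure = p.toSignedMeasure
      rw [h8, sub_zero]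
    calc x' = x'.toJordanDecomposition.toSignedMeasure := h6.symm
      _ = p.toSignedMeasure := h7
      _ = μx.toSignedMeasure := by
          ext A hA
          rw [Measure.toSignedMeasure_apply_measurable hA,
            Measure.toSignedMeasure_apply_measurable hA, hpμx]
      _ = x := hxs.symm
end

section
/- Let M be a compact metric space, Π_D a finite-dimensional space of continuous functions on M containing the constant functions, and suppose the dual certificate condition of Theorem 1 holds for a support set T. Then the minimizer of the TV minimization problem is supported on T. -/
open MeasureTheory

section Aux

variable {α : Type*} [MeasurableSpace α]

lemma vsum_apply {ι : Type*} (v : ι → VectorMeasure α ℝ) (s : Finset ι) (E : Set α) :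
    (∑ i ∈ s, v i) E = ∑ i ∈ s, v i E := by
  induction s using Finset.cons_induction with
  | empty => simp
  | cons a s ha ih => simp [Finset.sum_cons, VectorMeasure.add_apply, ih]

lemma sm_apply (μ : SignedMeasure α) (E : Set α) (hE : MeasurableSet E) :
    μ E = (μ.toJordanDecomposition.posPart E).toReal
        - (μ.toJordanDecomposition.negPart E).toReal := by
  conv_lhs => rw [← μ.toSignedMeasure_toJordanDecomposition]
  unfold JordanDecomposition.toSignedMeasure
  rw [VectorMeasure.sub_apply, Measure.toSignedMeasure_apply_measurable hE,
    Measure.toSignedMeasure_apply_measurable hE]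
  rfl

lemma jordan_add_eq (μ : SignedMeasure α) (p n : Measure α)
    [IsFiniteMeasure p] [IsFiniteMeasure n]
    (h : ∀ E, MeasurableSet E → μ E = (p E).toReal - (n E).toReal) :
    μ.toJordanDecomposition.posPart + n = μ.toJordanDecomposition.negPart + p := by
  ext E hE
  have h1 := sm_apply μ E hE
  have h2 := h E hE
  have hfp : p E ≠ ⊤ := measure_ne_top _ _
  have hfn : n E ≠ ⊤ := measure_ne_top _ _
  have hfpos : μ.toJordanDecomposition.posPart E ≠ ⊤ := measure_ne_top _ _
  have hfneg : μ.toJordanDecomposition.negPart E ≠ ⊤ := measure_ne_top _ _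
  have hreal : (μ.toJordanDecomposition.posPart E + n E).toReal
      = (μ.toJordanDecomposition.negPart E + p E).toReal := by
    rw [ENNReal.toReal_add hfpos hfn, ENNReal.toReal_add hfneg hfp]
    linarith
  have := (ENNReal.toReal_eq_toReal_iff' (ENNReal.add_ne_top.mpr ⟨hfpos, hfn⟩)
    (ENNReal.add_ne_top.mpr ⟨hfneg, hfp⟩)).mp hreal
  simpa [Measure.add_apply] using this

end Aux

section AuxC

set_option linter.unusedSectionVars false

variable {M : Type*} [MetricSpace M] [CompactSpace M] [MeasurableSpace M] [BorelSpace M]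

lemma cont_integrable_s13 (f : M → ℝ) (hf : Continuous f) (μ : Measure M) [IsFiniteMeasure μ] :
    Integrable f μ :=
  hf.integrable_of_hasCompactSupport
    (IsCompact.of_isClosed_subset isCompact_univ (isClosed_tsupport f) (Set.subset_univ _))

lemma sintegral_eq (μ : SignedMeasure M) (p n : Measure M)
    [IsFiniteMeasure p] [IsFiniteMeasure n]
    (h : ∀ E, MeasurableSet E → μ E = (p E).toReal - (n E).toReal)
    (f : M → ℝ) (hf : Continuous f) :
    sintegral μ f = (∫ x, f x ∂p) - ∫ x, f x ∂n := by
  have key := jordan_add_eq μ p n h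
  have h1 : (∫ x, f x ∂(μ.toJordanDecomposition.posPart + n))
      = ∫ x, f x ∂(μ.toJordanDecomposition.negPart + p) := by rw [key]
  rw [integral_add_measure (cont_integrable_s13 f hf _) (cont_integrable_s13 f hf _),
    integral_add_measure (cont_integrable_s13 f hf _) (cont_integrable_s13 f hf _)] at h1
  unfold sintegral
  linarith

lemma tv_le (μ : SignedMeasure M) (p n : Measure M)
    [IsFiniteMeasure p] [IsFiniteMeasure n]
    (h : ∀ E, MeasurableSet E → μ E = (p E).toReal - (n E).toReal) :
    μ.totalVariation Set.univ ≤ p Set.univ + n Set.univ := by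
  have key := jordan_add_eq μ p n h
  obtain ⟨S, hSm, hS1, hS2⟩ := μ.toJordanDecomposition.mutuallySingular
  have hpos : μ.toJordanDecomposition.posPart Set.univ ≤ p Set.univ := by
    have h0 : μ.toJordanDecomposition.posPart Set.univ
        ≤ μ.toJordanDecomposition.posPart S + μ.toJordanDecomposition.posPart Sᶜ := by
      rw [← Set.union_compl_self S]
      exact measure_union_le _ _
    have h1 : μ.toJordanDecomposition.posPart Sᶜ
        ≤ (μ.toJordanDecomposition.posPart + n) Sᶜ := by
      simp [Measure.add_apply]
    rw [key] at h1
    simp only [Measure.add_apply, hS2, zero_add] at h1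
    calc μ.toJordanDecomposition.posPart Set.univ
        ≤ μ.toJordanDecomposition.posPart S + μ.toJordanDecomposition.posPart Sᶜ := h0
      _ = μ.toJordanDecomposition.posPart Sᶜ := by rw [hS1, zero_add]
      _ ≤ p Sᶜ := h1
      _ ≤ p Set.univ := measure_mono (Set.subset_univ _)
  have hneg : μ.toJordanDecomposition.negPart Set.univ ≤ n Set.univ := by
    have h0 : μ.toJordanDecomposition.negPart Set.univ
        ≤ μ.toJordanDecomposition.negPart S + μ.toJordanDecomposition.negPart Sᶜ := by
      rw [← Set.union_compl_self S]
      exact measure_union_le _ _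
    have h1 : μ.toJordanDecomposition.negPart S
        ≤ (μ.toJordanDecomposition.negPart + p) S := by
      simp [Measure.add_apply]
    rw [← key] at h1
    simp only [Measure.add_apply, hS1, zero_add] at h1
    calc μ.toJordanDecomposition.negPart Set.univ
        ≤ μ.toJordanDecomposition.negPart S + μ.toJordanDecomposition.negPart Sᶜ := h0
      _ = μ.toJordanDecomposition.negPart S := by rw [hS2, add_zero]
      _ ≤ n S := h1
      _ ≤ n Set.univ := measure_mono (Set.subset_univ _)
  calc μ.totalVariation Set.univ
      = μ.toJordanDecomposition.posPart Set.univ + μ.toJordanDecomposition.negPart Set.univ := by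
        unfold SignedMeasure.totalVariation; simp [Measure.add_apply]
    _ ≤ p Set.univ + n Set.univ := add_le_add hpos hneg

lemma sintegral_sum (μ : SignedMeasure M) {D : ℕ} (a : Fin D → ℝ) (P : Fin D → C(M, ℝ)) :
    sintegral μ (fun τ => ∑ k : Fin D, a k * P k τ) = ∑ k : Fin D, a k * sintegral μ (P k) := by
  unfold sintegral
  rw [integral_finset_sum _ (fun k _ =>
        (cont_integrable_s13 (P k) (P k).continuous _).const_mul (a k)),
      integral_finset_sum _ (fun k _ =>
        (cont_integrable_s13 (P k) (P k).continuous _).const_mul (a k)),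
      ← Finset.sum_sub_distrib]
  refine Finset.sum_congr rfl fun k _ => ?_
  rw [integral_const_mul, integral_const_mul]
  ring

lemma max_sub (a : ℝ) : max a 0 - max (-a) 0 = a := by
  rcases le_total 0 a with h | h
  · rw [max_eq_left h, max_eq_right (by linarith)]; ring
  · rw [max_eq_right h, max_eq_left (by linarith)]; ring

lemma ofReal_add_ofReal_neg (a : ℝ) :
    ENNReal.ofReal a + ENNReal.ofReal (-a) = ENNReal.ofReal |a| := by
  rcases le_total 0 a with h | h
  · rw [abs_of_nonneg h, ENNReal.ofReal_eq_zero.mpr (by linarith : -a ≤ 0), add_zero]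
  · rw [abs_of_nonpos h, ENNReal.ofReal_eq_zero.mpr h, zero_add]

end AuxC

/-- under the dual certificate condition of Theorem 1 (and with `Π_D`
containing the constants), every TV-minimizer among measures matching the measurements is
supported on `T = {t_m}`. -/
theorem tv_minimizer_supported_on_T
    {M : Type*} [MetricSpace M] [CompactSpace M] [MeasurableSpace M] [BorelSpace M]
    {D s : ℕ} (P : Fin D → C(M, ℝ))
    (hconst : ∃ a : Fin D → ℝ, ∀ τ : M, (∑ k : Fin D, a k * P k τ) = 1)
    (t : Fin s → M) (c : Fin s → ℝ)
    (ht : Function.Injective t) (hc : ∀ m, c m ≠ 0)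
    (x : SignedMeasure M)
    (hx : x = ∑ m : Fin s, c m • (Measure.dirac (t m)).toSignedMeasure)
    (hcert : ∀ u : Fin s → ℝ, (∀ m, u m = 1 ∨ u m = -1) →
      ∃ a : Fin D → ℝ,
        (∀ m, (∑ k : Fin D, a k * P k (t m)) = u m) ∧
        (∀ τ : M, τ ∉ Set.range t → |∑ k : Fin D, a k * P k τ| < 1)) :
    ∀ x' : SignedMeasure M,
      (∀ k : Fin D, sintegral x' (P k) = sintegral x (P k)) →
      (∀ z : SignedMeasure M,
        (∀ k : Fin D, sintegral z (P k) = sintegral x (P k)) →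
        x'.totalVariation Set.univ ≤ z.totalVariation Set.univ) →
      x'.totalVariation ((Set.range t)ᶜ) = 0 := by
  intro x' hmatch hmin
  -- the sign pattern of `c`
  set u : Fin s → ℝ := fun m => if 0 < c m then 1 else -1 with hu_def
  have hu : ∀ m, u m = 1 ∨ u m = -1 := by
    intro m; by_cases h : 0 < c m <;> simp [hu_def, h]
  obtain ⟨a, ha1, ha2⟩ := hcert u hu
  set q : M → ℝ := fun τ => ∑ k : Fin D, a k * P k τ with hq_def
  have hq_cont : Continuous q := by
    apply continuous_finset_sum
    exact fun k _ => continuous_const.mul (P k).continuous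
  set S : ℝ := ∑ m : Fin s, |c m| with hS_def
  have hS_nonneg : 0 ≤ S := Finset.sum_nonneg fun m _ => abs_nonneg _
  -- a decomposition of x as a difference of positive measures
  set p : Measure M := ∑ m : Fin s, ENNReal.ofReal (c m) • Measure.dirac (t m) with hp_def
  set n : Measure M := ∑ m : Fin s, ENNReal.ofReal (-(c m)) • Measure.dirac (t m) with hn_def
  haveI hpf : IsFiniteMeasure p := by
    constructor
    rw [hp_def, Measure.finset_sum_apply]
    refine ENNReal.sum_lt_top.mpr fun m _ => ?_
    simp [Measure.smul_apply, ENNReal.mul_lt_top, ENNReal.ofReal_lt_top]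
  haveI hnf : IsFiniteMeasure n := by
    constructor
    rw [hn_def, Measure.finset_sum_apply]
    refine ENNReal.sum_lt_top.mpr fun m _ => ?_
    simp [Measure.smul_apply, ENNReal.mul_lt_top, ENNReal.ofReal_lt_top]
  have hdec : ∀ E, MeasurableSet E → x E = (p E).toReal - (n E).toReal := by
    intro E hE
    rw [hx, vsum_apply]
    have hterm : ∀ m : Fin s, (c m • (Measure.dirac (t m)).toSignedMeasure) E
        = c m * ((Measure.dirac (t m)) E).toReal := by
      intro m
      rw [VectorMeasure.smul_apply, Measure.toSignedMeasure_apply_measurable hE]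
      rfl
    rw [hp_def, hn_def, Measure.finset_sum_apply, Measure.finset_sum_apply,
      ENNReal.toReal_sum (fun m _ => by
        rw [Measure.smul_apply, smul_eq_mul]
        exact ENNReal.mul_ne_top ENNReal.ofReal_ne_top (measure_ne_top _ _)),
      ENNReal.toReal_sum (fun m _ => by
        rw [Measure.smul_apply, smul_eq_mul]
        exact ENNReal.mul_ne_top ENNReal.ofReal_ne_top (measure_ne_top _ _)),
      ← Finset.sum_sub_distrib]
    refine Finset.sum_congr rfl fun m _ => ?_
    rw [hterm]
    simp only [Measure.smul_apply, smul_eq_mul, ENNReal.toReal_mul, ENNReal.toReal_ofReal']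
    rw [← sub_mul, max_sub]
  -- sintegral of x against any continuous function
  have hx_sint : ∀ f : M → ℝ, Continuous f → sintegral x f = ∑ m : Fin s, c m * f (t m) := by
    intro f hf
    rw [sintegral_eq x p n hdec f hf, hp_def, hn_def,
      integral_finset_sum_measure (fun m _ =>
        ((cont_integrable_s13 f hf _).smul_measure ENNReal.ofReal_ne_top)),
      integral_finset_sum_measure (fun m _ =>
        ((cont_integrable_s13 f hf _).smul_measure ENNReal.ofReal_ne_top)),
      ← Finset.sum_sub_distrib]
    refine Finset.sum_congr rfl fun m _ => ?_
    rw [integral_smul_measure, integral_smul_measure, integral_dirac]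
    simp only [smul_eq_mul, ENNReal.toReal_ofReal']
    rw [← sub_mul, max_sub]
  -- sintegral of x against q equals S
  have hq_tm : ∀ m, q (t m) = u m := ha1
  have hxq : sintegral x q = S := by
    rw [hx_sint q hq_cont, hS_def]
    refine Finset.sum_congr rfl fun m _ => ?_
    rw [hq_tm]
    by_cases h : 0 < c m
    · simp [hu_def, h, abs_of_pos h]
    · have hlt : c m < 0 := lt_of_le_of_ne (not_lt.mp h) (hc m)
      simp [hu_def, h, abs_of_neg hlt]
  -- the total variation of x is at most S
  have htvx : x.totalVariation Set.univ ≤ ENNReal.ofReal S := by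
    refine le_trans (tv_le x p n hdec) ?_
    rw [hp_def, hn_def, Measure.finset_sum_apply, Measure.finset_sum_apply,
      ← Finset.sum_add_distrib, hS_def, ENNReal.ofReal_sum_of_nonneg (fun m _ => abs_nonneg _)]
    refine le_of_eq (Finset.sum_congr rfl fun m _ => ?_)
    simp only [Measure.smul_apply, smul_eq_mul, measure_univ, mul_one]
    exact ofReal_add_ofReal_neg (c m)
  -- minimality gives a bound on the total variation of x'
  have htv' : x'.totalVariation Set.univ ≤ ENNReal.ofReal S :=
    le_trans (hmin x fun k => rfl) htvx
  haveI : IsFiniteMeasure x'.totalVariation := by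
    unfold SignedMeasure.totalVariation; infer_instance
  have htv'_real : (x'.totalVariation Set.univ).toReal ≤ S :=
    ENNReal.toReal_le_of_le_ofReal hS_nonneg htv'
  -- sintegral of x' against q also equals S
  have hx'q : sintegral x' q = S := by
    rw [hq_def, sintegral_sum x' a P]
    rw [← hxq, hq_def, sintegral_sum x a P]
    exact Finset.sum_congr rfl fun k _ => by rw [hmatch k]
  -- |q| ≤ 1 everywhere
  have hq_le1 : ∀ τ, |q τ| ≤ 1 := by
    intro τ
    by_cases h : τ ∈ Set.range t
    · obtain ⟨m, rfl⟩ := h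
      rw [hq_tm]
      rcases hu m with h' | h' <;> rw [h'] <;> norm_num
    · exact le_of_lt (ha2 τ h)
  -- sintegral x' q ≤ ∫ |q| d(totalVariation x')
  set tv : Measure M := x'.totalVariation with htv_def
  have habs_int : Integrable (fun τ => |q τ|) tv := cont_integrable_s13 _ hq_cont.abs tv
  have hbound : S ≤ ∫ τ, |q τ| ∂tv := by
    rw [← hx'q]
    have hpos := cont_integrable_s13 q hq_cont x'.toJordanDecomposition.posPart
    have hneg := cont_integrable_s13 q hq_cont x'.toJordanDecomposition.negPart
    have h1 : (∫ τ, q τ ∂x'.toJordanDecomposition.posPart)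
        ≤ ∫ τ, |q τ| ∂x'.toJordanDecomposition.posPart :=
      integral_mono hpos (cont_integrable_s13 _ hq_cont.abs _) fun τ => le_abs_self _
    have h2 : -(∫ τ, q τ ∂x'.toJordanDecomposition.negPart)
        ≤ ∫ τ, |q τ| ∂x'.toJordanDecomposition.negPart := by
      rw [← integral_neg]
      exact integral_mono (Integrable.neg hneg) (cont_integrable_s13 _ hq_cont.abs _)
        fun τ => neg_le_abs _
    have h3 : (∫ τ, |q τ| ∂tv) = (∫ τ, |q τ| ∂x'.toJordanDecomposition.posPart)
        + ∫ τ, |q τ| ∂x'.toJordanDecomposition.negPart := by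
      rw [htv_def]
      unfold SignedMeasure.totalVariation
      exact integral_add_measure (cont_integrable_s13 _ hq_cont.abs _)
        (cont_integrable_s13 _ hq_cont.abs _)
    unfold sintegral
    rw [h3]
    linarith
  have hupper : (∫ τ, |q τ| ∂tv) ≤ (tv Set.univ).toReal := by
    calc (∫ τ, |q τ| ∂tv) ≤ ∫ _, (1 : ℝ) ∂tv :=
          integral_mono habs_int (integrable_const 1) fun τ => hq_le1 τ
      _ = (tv Set.univ).toReal := by rw [integral_const, smul_eq_mul, mul_one]; rfl
  -- hence ∫ (1 - |q|) dtv = 0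
  have hint_zero : (∫ τ, (1 - |q τ|) ∂tv) = 0 := by
    have h1 : (∫ τ, (1 - |q τ|) ∂tv) = (∫ _, (1 : ℝ) ∂tv) - ∫ τ, |q τ| ∂tv :=
      integral_sub (integrable_const 1) habs_int
    have h2 : (∫ _, (1 : ℝ) ∂tv) = (tv Set.univ).toReal := by
      rw [integral_const, smul_eq_mul, mul_one]
      rfl
    have h3 : 0 ≤ ∫ τ, (1 - |q τ|) ∂tv :=
      integral_nonneg fun τ => by have := hq_le1 τ; show (0:ℝ) ≤ 1 - |q τ|; linarith
    have : (∫ τ, (1 - |q τ|) ∂tv) ≤ 0 := by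
      rw [h1, h2]; linarith
    linarith
  have hae : (fun τ => 1 - |q τ|) =ᶠ[ae tv] 0 :=
    (integral_eq_zero_iff_of_nonneg (fun τ => by have := hq_le1 τ; show (0:ℝ) ≤ 1 - |q τ|; linarith)
      (cont_integrable_s13 _ (continuous_const.sub hq_cont.abs) tv)).mp hint_zero
  have hzero : tv {τ | ¬ (1 - |q τ| = 0)} = 0 := by
    have := hae
    rw [Filter.EventuallyEq, ae_iff] at this
    simpa using this
  refine measure_mono_null ?_ hzero
  intro τ hτ
  have hlt : |q τ| < 1 := ha2 τ hτ
  simp only [Set.mem_setOf_eq]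
  intro h
  linarith
end
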